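/- Let A be a Krull-Schmidt k-category with admissible ideal I, and let X = ⊕ᵢ Xᵢ, Y = ⊕ⱼ Yⱼ be decompositions into indecomposables with 1_{Xᵢ} ∉ I(Xᵢ,Xᵢ) and 1_{Yⱼ} ∉ I(Yⱼ,Yⱼ) for all i,j. Then a morphism f : X → Y is irreducible in A if and only if its image f + I(X,Y) is irreducible in the quotient category A/I. -/

import Mathlib

open CategoryTheory CategoryTheory.Limits

universe v u

variable {C : Type u} [Category.{v} C] [Preadditive C]

/-- A two-sided ideal of a preadditive category: a family of subgroups of the
Hom-groups closed under composition on both sides. -/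
structure CatIdeal (C : Type u) [Category.{v} C] [Preadditive C] where
  I : ∀ X Y : C, AddSubgroup (X ⟶ Y)
  comp_right : ∀ {X Y Z : C} (f : X ⟶ Y), f ∈ I X Y → ∀ g : Y ⟶ Z, f ≫ g ∈ I X Z
  comp_left : ∀ {X Y Z : C} (f : Y ⟶ Z), f ∈ I Y Z → ∀ g : X ⟶ Y, g ≫ f ∈ I X Z

/-- A morphism `f : X ⟶ Y` lies in the radical of the category if `1_X - g ∘ f`
is invertible for every `g : Y ⟶ X`. -/
def InCatRadical {X Y : C} (f : X ⟶ Y) : Prop :=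
  ∀ g : Y ⟶ X, IsIso (𝟙 X - f ≫ g)

/-- The square of the radical: the subgroup of `Hom(X,Y)` generated by composites
of two radical morphisms. -/
def radSq (X Y : C) : AddSubgroup (X ⟶ Y) :=
  AddSubgroup.closure
    {h | ∃ (W : C) (a : X ⟶ W) (b : W ⟶ Y), InCatRadical a ∧ InCatRadical b ∧ h = a ≫ b}

/-- An object is indecomposable if it is nonzero and admits no nontrivial
direct sum decomposition. -/
def IsIndecomposable [HasBinaryBiproducts C] (X : C) : Prop :=
  ¬ IsZero X ∧ ∀ (A B : C), (X ≅ A ⊞ B) → IsZero A ∨ IsZero B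

/-- `f : X ⟶ Y` is left almost split if it is not a section and every
non-section `u : X ⟶ U` factors through `f`. -/
def LeftAlmostSplit {X Y : C} (f : X ⟶ Y) : Prop :=
  ¬ IsSplitMono f ∧ ∀ (U : C) (u : X ⟶ U), ¬ IsSplitMono u → ∃ v : Y ⟶ U, f ≫ v = u

/-- `f` is left minimal if any `g` with `f ≫ g = f` is an automorphism. -/
def LeftMinimal {X Y : C} (f : X ⟶ Y) : Prop :=
  ∀ g : Y ⟶ Y, f ≫ g = f → IsIso g

/-- `f : X ⟶ Y` is right almost split if it is not a retraction and every
non-retraction `u : U ⟶ Y` factors through `f`. -/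
def RightAlmostSplit {X Y : C} (f : X ⟶ Y) : Prop :=
  ¬ IsSplitEpi f ∧ ∀ (U : C) (u : U ⟶ Y), ¬ IsSplitEpi u → ∃ v : U ⟶ X, v ≫ f = u

/-- `f` is right minimal if any `g` with `g ≫ f = f` is an automorphism. -/
def RightMinimal {X Y : C} (f : X ⟶ Y) : Prop :=
  ∀ g : X ⟶ X, g ≫ f = f → IsIso g

/-- An ideal is admissible if: (i) between indecomposables whose identities are
not in the ideal, the ideal is contained in the square of the radical;
(ii) morphisms in the ideal factor through minimal left almost split morphisms
within the ideal; (iii) dually for minimal right almost split morphisms. -/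
def CatIdeal.Admissible [HasBinaryBiproducts C] (I : CatIdeal C) : Prop :=
  (∀ (X Y : C), IsIndecomposable X → IsIndecomposable Y → 𝟙 X ∉ I.I X X →
      𝟙 Y ∉ I.I Y Y → ∀ f ∈ I.I X Y, f ∈ radSq X Y) ∧
  (∀ (X Y M : C) (f : X ⟶ Y), LeftAlmostSplit f → LeftMinimal f → 𝟙 X ∉ I.I X X →
      ∀ g ∈ I.I X M, ∃ h ∈ I.I Y M, f ≫ h = g) ∧
  (∀ (X Y M : C) (f : X ⟶ Y), RightAlmostSplit f → RightMinimal f → 𝟙 Y ∉ I.I Y Y →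
      ∀ g ∈ I.I M Y, ∃ h ∈ I.I M X, h ≫ f = g)

/-- A category is Krull-Schmidt if every object is a finite direct sum of objects
with local endomorphism rings. -/
def IsKrullSchmidt (C : Type u) [Category.{v} C] [Preadditive C]
    [HasFiniteBiproducts C] : Prop :=
  ∀ Z : C, ∃ (n : ℕ) (Zs : Fin n → C) (_ : Z ≅ ⨁ Zs), ∀ i, IsLocalRing (End (Zs i))

/-- The hom-relation identifying two morphisms when their difference lies in the
ideal; the quotient category `A/I` is the category-theoretic quotient by it. -/
def CatIdeal.rel (I : CatIdeal C) : HomRel C :=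
  fun {X Y} f g => f - g ∈ I.I X Y

/-- A morphism is irreducible if it is neither a section nor a retraction,
and in every factorisation f = g ≫ h, either h is a retraction or g is a section. -/
def IrreducibleHom {D : Type*} [Category D] {X Y : D} (f : X ⟶ Y) : Prop :=
  ¬ IsSplitMono f ∧ ¬ IsSplitEpi f ∧
    ∀ (Z : D) (g : X ⟶ Z) (h : Z ⟶ Y), g ≫ h = f → IsSplitEpi h ∨ IsSplitMono g


section Aux

open CategoryTheory.Preadditive

variable {C : Type u} [Category.{v} C] [Preadditive C]

lemma inCatRadical_comp_right {X Y Z : C} {f : X ⟶ Y} (hf : InCatRadical f) (h : Y ⟶ Z) :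
    InCatRadical (f ≫ h) := fun g => by
  simpa [Category.assoc] using hf (h ≫ g)

lemma isIso_one_sub_of_swap {X W : C} (a : X ⟶ W) (b : W ⟶ X)
    (h : IsIso (𝟙 W - b ≫ a)) : IsIso (𝟙 X - a ≫ b) := by
  set c := inv (𝟙 W - b ≫ a) with hc
  have h1 : b ≫ a ≫ c = c - 𝟙 W := by
    have h2 : (𝟙 W - b ≫ a) ≫ c = 𝟙 W := IsIso.hom_inv_id _
    rw [sub_comp, Category.id_comp, Category.assoc, sub_eq_iff_eq_add] at h2
    rw [eq_sub_iff_add_eq, add_comm]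
    exact h2.symm
  have h1' : c ≫ b ≫ a = c - 𝟙 W := by
    have h2 : c ≫ (𝟙 W - b ≫ a) = 𝟙 W := IsIso.inv_hom_id _
    rw [comp_sub, Category.comp_id, sub_eq_iff_eq_add] at h2
    rw [eq_sub_iff_add_eq, add_comm]
    exact h2.symm
  have key1 : ∀ {T : C} (z : W ⟶ T), b ≫ a ≫ c ≫ z = (c - 𝟙 W) ≫ z := by
    intro T z
    rw [← Category.assoc, ← Category.assoc, Category.assoc b a c, h1]
  have key2 : ∀ {T : C} (z : W ⟶ T), c ≫ b ≫ a ≫ z = (c - 𝟙 W) ≫ z := by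
    intro T z
    rw [← Category.assoc, ← Category.assoc, Category.assoc c b a, h1']
  refine ⟨𝟙 X + a ≫ c ≫ b, ?_, ?_⟩
  · have e1 : b ≫ (𝟙 X + a ≫ c ≫ b) = c ≫ b := by
      rw [comp_add, Category.comp_id, key1 b, sub_comp, Category.id_comp]
      abel
    calc (𝟙 X - a ≫ b) ≫ (𝟙 X + a ≫ c ≫ b)
        = (𝟙 X + a ≫ c ≫ b) - a ≫ b ≫ (𝟙 X + a ≫ c ≫ b) := by
          rw [sub_comp, Category.id_comp, Category.assoc]
      _ = (𝟙 X + a ≫ c ≫ b) - a ≫ c ≫ b := by rw [e1]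
      _ = 𝟙 X := by abel
  · have e2 : b ≫ (𝟙 X - a ≫ b) = (𝟙 W - b ≫ a) ≫ b := by
      rw [comp_sub, Category.comp_id, sub_comp, Category.id_comp, Category.assoc]
    calc (𝟙 X + a ≫ c ≫ b) ≫ (𝟙 X - a ≫ b)
        = (𝟙 X - a ≫ b) + a ≫ c ≫ b ≫ (𝟙 X - a ≫ b) := by
          rw [add_comp, Category.id_comp, Category.assoc, Category.assoc]
      _ = (𝟙 X - a ≫ b) + a ≫ c ≫ (𝟙 W - b ≫ a) ≫ b := by rw [e2]
      _ = (𝟙 X - a ≫ b) + a ≫ (c ≫ (𝟙 W - b ≫ a)) ≫ b := by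
          rw [Category.assoc]
      _ = (𝟙 X - a ≫ b) + a ≫ 𝟙 W ≫ b := by rw [IsIso.inv_hom_id]
      _ = 𝟙 X := by rw [Category.id_comp]; abel

lemma inCatRadical_comp_left {W X Y : C} {f : X ⟶ Y} (hf : InCatRadical f) (e : W ⟶ X) :
    InCatRadical (e ≫ f) := fun g => by
  have h0 : IsIso (𝟙 X - (f ≫ g) ≫ e) := by
    simpa [Category.assoc] using hf (g ≫ e)
  have := isIso_one_sub_of_swap e (f ≫ g) h0
  simpa [Category.assoc] using this

lemma inCatRadical_zero {X Y : C} : InCatRadical (0 : X ⟶ Y) := fun g => by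
  rw [zero_comp, sub_zero]
  infer_instance

lemma inCatRadical_neg {X Y : C} {f : X ⟶ Y} (hf : InCatRadical f) :
    InCatRadical (-f) := fun g => by
  simpa using hf (-g)

lemma inCatRadical_add {X Y : C} {f f' : X ⟶ Y} (hf : InCatRadical f)
    (hf' : InCatRadical f') : InCatRadical (f + f') := fun g => by
  haveI h1 : IsIso (𝟙 X - f ≫ g) := hf g
  have h3 : InCatRadical (inv (𝟙 X - f ≫ g) ≫ f') := inCatRadical_comp_left hf' _
  haveI h2 : IsIso (𝟙 X - inv (𝟙 X - f ≫ g) ≫ f' ≫ g) := by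
    simpa [Category.assoc] using h3 g
  have key : 𝟙 X - (f + f') ≫ g =
      (𝟙 X - f ≫ g) ≫ (𝟙 X - inv (𝟙 X - f ≫ g) ≫ f' ≫ g) := by
    rw [comp_sub, Category.comp_id, ← Category.assoc, ← Category.assoc, Category.assoc,
      IsIso.hom_inv_id, Category.id_comp, add_comp]
    abel
  rw [key]
  infer_instance

lemma isIso_one_sub_of_radical {X : C} {u : X ⟶ X} (hu : InCatRadical u) :
    IsIso (𝟙 X - u) := by
  simpa using hu (𝟙 X)

/-- A morphism factoring as a composite of two radical morphisms. -/
def RadFactor {X Y : C} (u : X ⟶ Y) : Prop :=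
  ∃ (W : C) (a : X ⟶ W) (b : W ⟶ Y), InCatRadical a ∧ InCatRadical b ∧ u = a ≫ b

lemma radFactor_zero (X Y : C) : RadFactor (0 : X ⟶ Y) :=
  ⟨X, 0, 0, inCatRadical_zero, inCatRadical_zero, by simp⟩

lemma radFactor_neg {X Y : C} {u : X ⟶ Y} (h : RadFactor u) : RadFactor (-u) := by
  obtain ⟨W, a, b, ha, hb, rfl⟩ := h
  exact ⟨W, a, -b, ha, inCatRadical_neg hb, by simp⟩

lemma radFactor_add [HasBinaryBiproducts C] {X Y : C} {u v : X ⟶ Y}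
    (h : RadFactor u) (h' : RadFactor v) : RadFactor (u + v) := by
  obtain ⟨W, a, b, ha, hb, rfl⟩ := h
  obtain ⟨W', a', b', ha', hb', rfl⟩ := h'
  refine ⟨W ⊞ W', biprod.lift a a', biprod.desc b b', ?_, ?_, ?_⟩
  · rw [biprod.lift_eq]
    exact inCatRadical_add (inCatRadical_comp_right ha _) (inCatRadical_comp_right ha' _)
  · rw [biprod.desc_eq]
    exact inCatRadical_add (inCatRadical_comp_left hb _) (inCatRadical_comp_left hb' _)
  · rw [biprod.lift_desc]

lemma radFactor_of_radSq [HasBinaryBiproducts C] {X Y : C} {u : X ⟶ Y}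
    (h : u ∈ radSq X Y) : RadFactor u := by
  refine AddSubgroup.closure_induction (p := fun g _ => RadFactor g) ?_ ?_ ?_ ?_ h
  · rintro x ⟨W, a, b, ha, hb, rfl⟩
    exact ⟨W, a, b, ha, hb, rfl⟩
  · exact radFactor_zero _ _
  · intro x y _ _ hx hy
    exact radFactor_add hx hy
  · intro x _ hx
    exact radFactor_neg hx

lemma radFactor_of_mem [HasFiniteBiproducts C] [HasBinaryBiproducts C]
    (I : CatIdeal C) (hI : I.Admissible)
    {X Y : C} {n m : ℕ} (Xs : Fin n → C) (Ys : Fin m → C)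
    (iX : X ≅ ⨁ Xs) (iY : Y ≅ ⨁ Ys)
    (hXind : ∀ i, IsIndecomposable (Xs i)) (hYind : ∀ j, IsIndecomposable (Ys j))
    (hXI : ∀ i, 𝟙 (Xs i) ∉ I.I (Xs i) (Xs i)) (hYI : ∀ j, 𝟙 (Ys j) ∉ I.I (Ys j) (Ys j))
    {u : X ⟶ Y} (hu : u ∈ I.I X Y) : RadFactor u := by
  set v := iX.inv ≫ u ≫ iY.hom with hvdef
  have hv : v ∈ I.I (⨁ Xs) (⨁ Ys) := I.comp_left _ (I.comp_right _ hu _) _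
  have hvsum : v = ∑ i : Fin n, ∑ j : Fin m,
      biproduct.π Xs i ≫ (biproduct.ι Xs i ≫ v ≫ biproduct.π Ys j) ≫ biproduct.ι Ys j := by
    apply biproduct.hom_ext
    intro j
    apply biproduct.hom_ext'
    intro i
    simp [Preadditive.sum_comp, Preadditive.comp_sum, biproduct.ι_π, biproduct.ι_π_assoc,
      comp_dite, dite_comp]
  have hRF : RadFactor v := by
    rw [hvsum]
    refine Finset.sum_induction _ RadFactor (fun a b ha hb => radFactor_add ha hb)
      (radFactor_zero _ _) ?_
    intro i _
    refine Finset.sum_induction _ RadFactor (fun a b ha hb => radFactor_add ha hb)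
      (radFactor_zero _ _) ?_
    intro j _
    have hm : biproduct.ι Xs i ≫ v ≫ biproduct.π Ys j ∈ I.I (Xs i) (Ys j) :=
      I.comp_left _ (I.comp_right _ hv _) _
    obtain ⟨W, a, b, ha, hb, hab⟩ :=
      radFactor_of_radSq (hI.1 _ _ (hXind i) (hYind j) (hXI i) (hYI j) _ hm)
    exact ⟨W, biproduct.π Xs i ≫ a, b ≫ biproduct.ι Ys j,
      inCatRadical_comp_left ha _, inCatRadical_comp_right hb _,
      by rw [hab]; simp [Category.assoc]⟩
  obtain ⟨W, a, b, ha, hb, hab⟩ := hRF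
  refine ⟨W, iX.hom ≫ a, b ≫ iY.inv, inCatRadical_comp_left ha _,
    inCatRadical_comp_right hb _, ?_⟩
  have : u = iX.hom ≫ v ≫ iY.inv := by
    rw [hvdef]
    simp
  rw [this, hab]
  simp [Category.assoc]

lemma inCatRadical_of_radFactor {X Y : C} {u : X ⟶ Y} (h : RadFactor u) :
    InCatRadical u := by
  obtain ⟨W, a, b, ha, _, rfl⟩ := h
  exact inCatRadical_comp_right ha b

lemma catIdeal_congruence (I : CatIdeal C) : Congruence I.rel where
  equivalence := by
    refine ⟨fun f => ?_, fun {f g} h => ?_, fun {f g h} h1 h2 => ?_⟩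
    · show f - f ∈ I.I _ _
      rw [sub_self]; exact zero_mem _
    · show g - f ∈ I.I _ _
      have := (I.I _ _).neg_mem h
      rwa [neg_sub] at this
    · show f - h ∈ I.I _ _
      have := add_mem h1 h2
      rwa [sub_add_sub_cancel] at this
  comp_left := by
    intro X Y Z f g g' h
    show f ≫ g - f ≫ g' ∈ I.I _ _
    rw [← Preadditive.comp_sub]
    exact I.comp_left _ h f
  comp_right := by
    intro X Y Z f f' g h
    show f ≫ g - f' ≫ g ∈ I.I _ _
    rw [← Preadditive.sub_comp]
    exact I.comp_right _ h g

end Aux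

/-- In a Krull-Schmidt `k`-category with admissible ideal `I`, if `X` and `Y`
decompose into indecomposables whose identities are not in `I`, then a morphism
`f : X ⟶ Y` is irreducible in `A` iff its image is irreducible in `A/I`. -/
theorem stmt_19 {k : Type*} [CommRing k] {C : Type u} [Category.{v} C] [Preadditive C]
    [Linear k C] [HasFiniteBiproducts C] [HasBinaryBiproducts C] (hKS : IsKrullSchmidt C)
    (I : CatIdeal C) (hI : I.Admissible)
    {X Y : C} {n m : ℕ} (Xs : Fin n → C) (Ys : Fin m → C)
    (iX : X ≅ ⨁ Xs) (iY : Y ≅ ⨁ Ys)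
    (hXind : ∀ i, IsIndecomposable (Xs i)) (hYind : ∀ j, IsIndecomposable (Ys j))
    (hXI : ∀ i, 𝟙 (Xs i) ∉ I.I (Xs i) (Xs i)) (hYI : ∀ j, 𝟙 (Ys j) ∉ I.I (Ys j) (Ys j))
    (f : X ⟶ Y) :
    IrreducibleHom f ↔ IrreducibleHom ((Quotient.functor I.rel).map f) := by
  haveI := catIdeal_congruence I
  set F := Quotient.functor I.rel with hF
  have hradX : ∀ u ∈ I.I X X, InCatRadical u := fun u hu =>
    inCatRadical_of_radFactor (radFactor_of_mem I hI Xs Xs iX iX hXind hXind hXI hXI hu)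
  have hradY : ∀ u ∈ I.I Y Y, InCatRadical u := fun u hu =>
    inCatRadical_of_radFactor (radFactor_of_mem I hI Ys Ys iY iY hYind hYind hYI hYI hu)
  have key_mono : ∀ {Z : C} (g : X ⟶ Z) (s : Z ⟶ X),
      g ≫ s - 𝟙 X ∈ I.I X X → IsSplitMono g := by
    intro Z g s hu
    have h2 : IsIso (𝟙 X - -(g ≫ s - 𝟙 X)) :=
      isIso_one_sub_of_radical (inCatRadical_neg (hradX _ hu))
    rw [show 𝟙 X - -(g ≫ s - 𝟙 X) = g ≫ s by abel] at h2
    exact IsSplitMono.mk' ⟨s ≫ inv (g ≫ s), by rw [← Category.assoc, IsIso.hom_inv_id]⟩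
  have key_epi : ∀ {Z : C} (h : Z ⟶ Y) (s : Y ⟶ Z),
      s ≫ h - 𝟙 Y ∈ I.I Y Y → IsSplitEpi h := by
    intro Z h s hu
    have h2 : IsIso (𝟙 Y - -(s ≫ h - 𝟙 Y)) :=
      isIso_one_sub_of_radical (inCatRadical_neg (hradY _ hu))
    rw [show 𝟙 Y - -(s ≫ h - 𝟙 Y) = s ≫ h by abel] at h2
    exact IsSplitEpi.mk' ⟨inv (s ≫ h) ≫ s, by rw [Category.assoc, IsIso.inv_hom_id]⟩
  constructor
  · rintro ⟨hm, he, hfact⟩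
    refine ⟨?_, ?_, ?_⟩
    · intro hsm
      have se := hsm.exists_splitMono.some
      obtain ⟨s, hs⟩ := F.map_surjective se.retraction
      apply hm
      apply key_mono f s
      have hmap : F.map (f ≫ s) = F.map (𝟙 X) := by
        rw [F.map_comp, F.map_id, hs]
        exact se.id
      exact (Quotient.functor_map_eq_iff I.rel _ _).mp hmap
    · intro hse
      have se := hse.exists_splitEpi.some
      obtain ⟨s, hs⟩ := F.map_surjective se.section_
      apply he
      apply key_epi f s
      have hmap : F.map (s ≫ f) = F.map (𝟙 Y) := by
        rw [F.map_comp, F.map_id, hs]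
        exact se.id
      exact (Quotient.functor_map_eq_iff I.rel _ _).mp hmap
    · rintro ⟨Z⟩ gq hq hcomp
      obtain ⟨g, rfl⟩ := F.map_surjective gq
      obtain ⟨h, rfl⟩ := F.map_surjective hq
      have hrel : I.rel (g ≫ h) f := by
        apply (Quotient.functor_map_eq_iff I.rel _ _).mp
        rw [F.map_comp]
        exact hcomp
      have hu : f - g ≫ h ∈ I.I X Y := by
        have := (I.I X Y).neg_mem hrel
        rwa [neg_sub] at this
      obtain ⟨W, a, b, ha, hb, hab⟩ :=
        radFactor_of_mem I hI Xs Ys iX iY hXind hYind hXI hYI hu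
      have hf2 : biprod.lift g a ≫ biprod.desc h b = f := by
        rw [biprod.lift_desc, ← hab]
        abel
      rcases hfact _ _ _ hf2 with hepi | hmono
      · left
        obtain ⟨s, hs⟩ : ∃ s : Y ⟶ Z ⊞ W, s ≫ biprod.desc h b = 𝟙 Y :=
          ⟨hepi.exists_splitEpi.some.section_, hepi.exists_splitEpi.some.id⟩
        rw [biprod.desc_eq] at hs
        have hs' : (s ≫ biprod.fst) ≫ h + (s ≫ biprod.snd) ≫ b = 𝟙 Y := by
          rw [Preadditive.comp_add] at hs
          simpa [Category.assoc] using hs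
        have ht : InCatRadical ((s ≫ biprod.snd) ≫ b) :=
          inCatRadical_comp_left hb _
        haveI : IsIso ((s ≫ biprod.fst) ≫ h) := by
          have h3 := isIso_one_sub_of_radical ht
          rwa [show 𝟙 Y - (s ≫ biprod.snd) ≫ b = (s ≫ biprod.fst) ≫ h by
            rw [← hs']; abel] at h3
        haveI : IsSplitEpi h := IsSplitEpi.mk'
          ⟨inv ((s ≫ biprod.fst) ≫ h) ≫ (s ≫ biprod.fst), by
            rw [Category.assoc, IsIso.inv_hom_id]⟩
        infer_instance
      · right
        obtain ⟨r, hr⟩ : ∃ r : Z ⊞ W ⟶ X, biprod.lift g a ≫ r = 𝟙 X :=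
          ⟨hmono.exists_splitMono.some.retraction, hmono.exists_splitMono.some.id⟩
        rw [biprod.lift_eq] at hr
        have hr' : g ≫ (biprod.inl ≫ r) + a ≫ (biprod.inr ≫ r) = 𝟙 X := by
          rw [Preadditive.add_comp] at hr
          simpa [Category.assoc] using hr
        have ht : InCatRadical (a ≫ (biprod.inr ≫ r)) :=
          inCatRadical_comp_right ha _
        haveI : IsIso (g ≫ (biprod.inl ≫ r)) := by
          have h3 := isIso_one_sub_of_radical ht
          rwa [show 𝟙 X - a ≫ (biprod.inr ≫ r) = g ≫ (biprod.inl ≫ r) by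
            rw [← hr']; abel] at h3
        haveI : IsSplitMono g := IsSplitMono.mk'
          ⟨(biprod.inl ≫ r) ≫ inv (g ≫ (biprod.inl ≫ r)), by
            rw [← Category.assoc, IsIso.hom_inv_id]⟩
        infer_instance
  · rintro ⟨hm, he, hfact⟩
    refine ⟨fun hsm => hm ?_, fun hse => he ?_, ?_⟩
    · haveI := hsm
      infer_instance
    · haveI := hse
      infer_instance
    · intro Z g h hgh
      rcases hfact (F.obj Z) (F.map g) (F.map h) (by rw [← F.map_comp, hgh]) with hepi | hmono
      · left
        have se := hepi.exists_splitEpi.some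
        obtain ⟨s, hs⟩ := F.map_surjective se.section_
        apply key_epi h s
        have hmap : F.map (s ≫ h) = F.map (𝟙 Y) := by
          rw [F.map_comp, F.map_id, hs]
          exact se.id
        exact (Quotient.functor_map_eq_iff I.rel _ _).mp hmap
      · right
        have sm := hmono.exists_splitMono.some
        obtain ⟨s, hs⟩ := F.map_surjective sm.retraction
        apply key_mono g s
        have hmap : F.map (g ≫ s) = F.map (𝟙 X) := by
          rw [F.map_comp, F.map_id, hs]
          exact sm.id
        exact (Quotient.functor_map_eq_iff I.rel _ _).mp hmap
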